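/- arXiv:math/9809211 — 2 statements merged into one kernel-verified Lean document; each statement's English description precedes it below -/
import Mathlib

section
/- Let G be a non-trivial finite solvable group. Then the Frattini subgroup Φ(G) is a proper subgroup of the Fitting subgroup F(G), i.e. Φ(G) ≤ F(G) and Φ(G) ≠ F(G). -/
/-- The Fitting subgroup of a group: the join of all nilpotent normal subgroups. -/
def fittingSubgroup (G : Type*) [Group G] : Subgroup G :=
  ⨆ N : {N : Subgroup G // N.Normal ∧ Group.IsNilpotent N}, (N : Subgroup G)

lemma le_fittingSubgroup {G : Type*} [Group G] (N : Subgroup G)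
    (h1 : N.Normal) (h2 : Group.IsNilpotent N) : N ≤ fittingSubgroup G :=
  le_iSup (fun N : {N : Subgroup G // N.Normal ∧ Group.IsNilpotent N} => (N : Subgroup G))
    ⟨N, h1, h2⟩

/-- In a non-trivial finite solvable group, the Frattini subgroup is a proper
subgroup of the Fitting subgroup. -/
theorem frattini_lt_fitting_of_finite_solvable
    (G : Type*) [Group G] [Finite G] [Nontrivial G] [Group.IsSolvable G] :
    frattini G < fittingSubgroup G := by
  classical
  set Φ := frattini G with hΦdef
  -- Φ ≤ fitting
  have hΦnormal : Φ.Normal := inferInstance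
  have hle : Φ ≤ fittingSubgroup G := le_fittingSubgroup Φ hΦnormal frattini_nilpotent
  -- Φ ≠ ⊤
  have hΦne : Φ ≠ ⊤ := by
    rcases eq_top_or_exists_le_coatom (⊥ : Subgroup G) with h | ⟨M, hM, -⟩
    · exact absurd h bot_ne_top
    · intro h
      exact hM.1 (top_le_iff.mp (h ▸ frattini_le_coatom hM))
  set Q := G ⧸ Φ with hQdef
  have hQnontriv : Nontrivial Q := by
    have : ¬ ∀ x : G, x ∈ Φ := fun h => hΦne ((Subgroup.eq_top_iff' Φ).mpr h)
    push_neg at this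
    obtain ⟨g, hg⟩ := this
    exact ⟨⟨QuotientGroup.mk g, 1, fun h => hg ((QuotientGroup.eq_one_iff g).mp h)⟩⟩
  -- smallest nontrivial term of derived series of Q
  obtain ⟨m, hm⟩ := Group.IsSolvable.solvable (G := Q)
  have hex : ∃ n, derivedSeries Q n = ⊥ := ⟨m, hm⟩
  set n := Nat.find hex with hndef
  have hn : derivedSeries Q n = ⊥ := Nat.find_spec hex
  have hn0 : n ≠ 0 := by
    intro h
    rw [h, derivedSeries_zero] at hn
    exact top_ne_bot hn
  set A := derivedSeries Q (n - 1) with hAdef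
  have hAne : A ≠ ⊥ := Nat.find_min hex (Nat.sub_lt (Nat.pos_of_ne_zero hn0) one_pos)
  have hAcomm : ⁅A, A⁆ = ⊥ := by
    have : derivedSeries Q (n - 1 + 1) = ⊥ := by
      rwa [Nat.sub_add_cancel (Nat.one_le_iff_ne_zero.mpr hn0)]
    rwa [derivedSeries_succ] at this
  have hAcommute : ∀ a ∈ A, ∀ b ∈ A, a * b = b * a := by
    intro a ha b hb
    have := Subgroup.commutator_eq_bot_iff_le_centralizer.mp hAcomm ha
    exact (Subgroup.mem_centralizer_iff.mp this b hb).symm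
  have hAnormal : A.Normal := derivedSeries_normal Q (n - 1)
  -- a prime dividing card A
  have hAcard : Nat.card A ≠ 1 := by
    rw [Ne, Subgroup.card_eq_one]
    exact hAne
  obtain ⟨p, hp, hpdvd⟩ := Nat.exists_prime_and_dvd hAcard
  haveI : Fact p.Prime := ⟨hp⟩
  obtain ⟨g, hg⟩ := exists_prime_orderOf_dvd_card' (G := A) p hpdvd
  -- K = p-torsion of A, a nontrivial normal p-subgroup of Q
  set K : Subgroup Q :=
    { carrier := {x | x ∈ A ∧ x ^ p = 1}
      one_mem' := ⟨A.one_mem, one_pow p⟩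
      mul_mem' := by
        rintro a b ⟨haA, hap⟩ ⟨hbA, hbp⟩
        refine ⟨A.mul_mem haA hbA, ?_⟩
        rw [Commute.mul_pow (hAcommute a haA b hbA), hap, hbp, one_mul]
      inv_mem' := by
        rintro a ⟨haA, hap⟩
        exact ⟨A.inv_mem haA, by rw [inv_pow, hap, inv_one]⟩ } with hKdef
  have hKnormal : K.Normal := by
    constructor
    rintro x ⟨hxA, hxp⟩ g
    refine ⟨hAnormal.conj_mem x hxA g, ?_⟩
    have : (g * x * g⁻¹) ^ p = g * x ^ p * g⁻¹ := by
      simp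
    rw [this, hxp, mul_one, mul_inv_cancel]
  have hgK : (g : Q) ∈ K := by
    refine ⟨g.2, ?_⟩
    have h1 : g ^ p = 1 := by rw [← hg, pow_orderOf_eq_one]
    exact_mod_cast h1
  have hgne : (g : Q) ≠ 1 := by
    intro h
    have : g = 1 := Subtype.ext h
    rw [this, orderOf_one] at hg
    exact hp.ne_one hg.symm
  have hKne : K ≠ ⊥ := fun h => hgne (Subgroup.mem_bot.mp (h ▸ hgK))
  -- N = preimage of K in G
  set π := QuotientGroup.mk' Φ with hπdef
  have hπsurj : Function.Surjective π := QuotientGroup.mk'_surjective Φ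
  have hkerπ : π.ker = Φ := QuotientGroup.ker_mk' Φ
  set N : Subgroup G := K.comap π with hNdef
  haveI hNnormal : N.Normal := hKnormal.comap π
  have hΦleN : Φ ≤ N := by
    rw [← hkerπ]
    exact fun x hx => by simp [hNdef, Subgroup.mem_comap, MonoidHom.mem_ker.mp hx, K.one_mem]
  have hmapN : N.map π = K := Subgroup.map_comap_eq_self_of_surjective hπsurj K
  have hNneΦ : N ≠ Φ := by
    intro h
    apply hKne
    rw [← hmapN, h]
    exact (Subgroup.map_eq_bot_iff Φ).mpr hkerπ.ge
  -- the quotient N / (Φ.subgroupOf N) is a p-group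
  set Φ' := Φ.subgroupOf N with hΦ'def
  haveI hΦ'normal : Φ'.Normal := Subgroup.Normal.subgroupOf hΦnormal N
  have hquotP : IsPGroup p (N ⧸ Φ') := by
    intro x
    refine ⟨1, ?_⟩
    induction x using QuotientGroup.induction_on with
    | H z =>
      rw [pow_one, ← QuotientGroup.mk_pow, QuotientGroup.eq_one_iff]
      have hz : π (z : G) ∈ K := z.2
      have : π ((z : G) ^ p) = 1 := by rw [map_pow]; exact hz.2
      have hmem : (z : G) ^ p ∈ Φ := by rw [← hkerπ]; exact this
      simpa [hΦ'def, Subgroup.mem_subgroupOf] using hmem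
  -- Sylow p-subgroup of N
  obtain ⟨P⟩ : Nonempty (Sylow p N) := Sylow.nonempty
  set T : Subgroup N := (P : Subgroup N) ⊔ Φ' with hTdef
  have hTtop : T = ⊤ := by
    rw [← Subgroup.index_eq_one]
    have h1 : ¬ p ∣ (P : Subgroup N).index := P.not_dvd_index
    have h2 : T.index ∣ (P : Subgroup N).index :=
      Subgroup.index_dvd_of_le le_sup_left
    have h3 : ¬ p ∣ T.index := fun h => h1 (h.trans h2) |>.elim
    -- T.index divides card of p-group quotient
    have hker : (QuotientGroup.mk' Φ').ker ≤ T := by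
      rw [QuotientGroup.ker_mk']
      exact le_sup_right
    have h4 : T.index = (T.map (QuotientGroup.mk' Φ')).index :=
      (Subgroup.index_map_eq T (QuotientGroup.mk'_surjective Φ') hker).symm
    obtain ⟨k, hk⟩ := IsPGroup.iff_card.mp hquotP
    have h5 : T.index ∣ p ^ k := by
      rw [h4, ← hk]
      exact Subgroup.index_dvd_card _
    have hcop : Nat.Coprime T.index (p ^ k) :=
      Nat.Coprime.pow_right k ((Nat.Prime.coprime_iff_not_dvd hp).mpr h3).symm
    exact Nat.eq_one_of_dvd_one (hcop ▸ Nat.dvd_gcd dvd_rfl h5)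
  -- N = Pg ⊔ Φ
  set Pg : Subgroup G := ((P : Subgroup N)).map N.subtype with hPgdef
  have hNeq : N = Pg ⊔ Φ := by
    have h : Subgroup.map N.subtype ((P : Subgroup N) ⊔ Φ') = Subgroup.map N.subtype ⊤ := by
      rw [← hTdef, hTtop]
    rw [Subgroup.map_sup, hΦ'def, Subgroup.subgroupOf_map_subtype,
      inf_of_le_left hΦleN, ← MonoidHom.range_eq_map, Subgroup.range_subtype] at h
    exact h.symm
  -- Frattini argument
  have hFr := Sylow.normalizer_sup_eq_top (N := N) P
  have hFr2 : Subgroup.normalizer (Pg : Set G) ⊔ (Pg ⊔ Φ) = ⊤ := by rw [← hNeq]; exact hFr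
  rw [← sup_assoc, sup_eq_left.mpr Subgroup.le_normalizer] at hFr2
  have hnorm : Subgroup.normalizer (Pg : Set G) = ⊤ := frattini_nongenerating hFr2
  have hPgnormal : Pg.Normal := Subgroup.normalizer_eq_top_iff.mp hnorm
  have hPgnilp : Group.IsNilpotent Pg := (P.isPGroup'.map N.subtype).isNilpotent
  have hPgfit : Pg ≤ fittingSubgroup G := le_fittingSubgroup Pg hPgnormal hPgnilp
  refine lt_of_le_of_ne hle ?_
  intro heq
  have hPgΦ : Pg ≤ Φ := hPgfit.trans heq.ge
  exact hNneΦ (le_antisymm (hNeq ▸ sup_le hPgΦ le_rfl) hΦleN)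
end

section
/- Let G be a non-trivial finite solvable group. Then the Fitting subgroup F(G) has a proper supplement in G: there exists a subgroup U of G with U ≠ G and F(G)·U = G (equivalently, the join F(G) ⊔ U equals G). In particular, the map F(G) ⋊ U → G induced by multiplication (n,u) ↦ nu, where U acts on F(G) by conjugation, is a surjective group homomorphism. -/
instance fittingSubgroup_normal (G : Type*) [Group G] : (fittingSubgroup G).Normal := by
  constructor
  intro n hn g
  refine Subgroup.iSup_induction (G := G)
    (fun N : {N : Subgroup G // N.Normal ∧ Group.IsNilpotent N} => (N : Subgroup G))
    (C := fun x => g * x * g⁻¹ ∈ fittingSubgroup G) hn (fun N x hx => ?_) ?_ (fun x y hx hy => ?_)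
  · exact Subgroup.mem_iSup_of_mem N (N.2.1.conj_mem x hx g)
  · simpa using (fittingSubgroup G).one_mem
  · show g * (x * y) * g⁻¹ ∈ fittingSubgroup G
    have h : g * (x * y) * g⁻¹ = (g * x * g⁻¹) * (g * y * g⁻¹) := by group
    rw [h]; exact (fittingSubgroup G).mul_mem hx hy

open Subgroup Pointwise

lemma nilpotent_normal_le_fitting {G : Type*} [Group G] (N : Subgroup G) (hN : N.Normal)
    (hn : Group.IsNilpotent N) : N ≤ fittingSubgroup G :=
  le_iSup (fun N : {N : Subgroup G // N.Normal ∧ Group.IsNilpotent N} => (N : Subgroup G))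
    ⟨N, hN, hn⟩

lemma frattini_le_fitting (G : Type*) [Group G] [Finite G] :
    frattini G ≤ fittingSubgroup G :=
  nilpotent_normal_le_fitting _ inferInstance frattini_nilpotent

/-- If every Sylow subgroup of a finite group is contained in `S`, then `S = ⊤`. -/
lemma eq_top_of_sylow_le {X : Type*} [Group X] [Finite X] (S : Subgroup X)
    (h : ∀ p : ℕ, p.Prime → ∃ P : Sylow p X, (P : Subgroup X) ≤ S) : S = ⊤ := by
  rw [← Subgroup.index_eq_one]
  by_contra hidx
  set q := S.index.minFac with hq
  have hqp : q.Prime := Nat.minFac_prime hidx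
  haveI : Fact q.Prime := ⟨hqp⟩
  obtain ⟨P, hP⟩ := h q hqp
  have h1 : Nat.card P = q ^ (Nat.card X).factorization q := Sylow.card_eq_multiplicity P
  have h2 : Nat.card P ∣ Nat.card S := Subgroup.card_dvd_of_le hP
  have h3 : q ∣ S.index := Nat.minFac_dvd _
  have h2' : q ^ ((Nat.card X).factorization q) ∣ Nat.card S := by rw [← h1]; exact h2
  have h4 : q ^ ((Nat.card X).factorization q + 1) ∣ Nat.card S * S.index := by
    rw [pow_succ]
    exact mul_dvd_mul h2' h3
  rw [S.card_mul_index] at h4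
  exact Nat.pow_succ_factorization_not_dvd Nat.card_pos.ne' hqp h4

/-- Key step: if `H` is normal, contains the Frattini subgroup, and `⁅H,H⁆ ≤ frattini G`,
then (assuming `fittingSubgroup G ≤ frattini G`) every Sylow subgroup of `H` lies in
`frattini G`. -/
lemma sylow_map_le_frattini {G : Type*} [Group G] [Finite G] (H : Subgroup G) [H.Normal]
    (hΦH : frattini G ≤ H) (hcomm : ⁅H, H⁆ ≤ frattini G)
    (hFF : fittingSubgroup G ≤ frattini G)
    {p : ℕ} [Fact p.Prime] (P : Sylow p H) :
    Subgroup.map H.subtype (P : Subgroup H) ≤ frattini G := by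
  set P' : Subgroup G := Subgroup.map H.subtype (P : Subgroup H) with hP'
  have hP'H : P' ≤ H := map_subtype_le _
  -- Frattini argument for `H`:
  have frattArg : normalizer (P' : Set G) ⊔ H = ⊤ := Sylow.normalizer_sup_eq_top P
  set K : Subgroup G := P' ⊔ frattini G with hK
  have hΦK : frattini G ≤ K := le_sup_right
  have hP'K : P' ≤ K := le_sup_left
  have hKH : K ≤ H := sup_le hP'H hΦH
  have hKmem : ∀ x : G, x ∈ K ↔ ∃ a ∈ P', ∃ b ∈ frattini G, a * b = x := by
    intro x
    have hset : (↑(P' ⊔ frattini G) : Set G) = (P' : Set G) * (frattini G : Set G) :=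
      mul_normal _ _
    constructor
    · intro hx
      have : x ∈ (P' : Set G) * (frattini G : Set G) := hset ▸ hx
      obtain ⟨a, ha, b, hb, hab⟩ := this
      exact ⟨a, ha, b, hb, hab⟩
    · rintro ⟨a, ha, b, hb, rfl⟩
      exact mul_mem (hP'K ha) (hΦK hb)
  -- the normalizer of `P'` normalizes `K`
  have hN1 : normalizer (P' : Set G) ≤ normalizer (K : Set G) := by
    intro g hg
    rw [mem_normalizer_iff] at hg ⊢
    intro x
    constructor
    · intro hx
      obtain ⟨a, ha, b, hb, rfl⟩ := (hKmem x).1 hx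
      have : g * (a * b) * g⁻¹ = (g * a * g⁻¹) * (g * b * g⁻¹) := by group
      rw [this]
      exact mul_mem (hP'K ((hg a).1 ha)) (hΦK ((frattini G).normal_of_characteristic.conj_mem b hb g))
    · intro hx
      obtain ⟨a, ha, b, hb, hab⟩ := (hKmem _).1 hx
      have hx' : x = (g⁻¹ * a * g) * (g⁻¹ * b * g) := by
        have : a * b = g * x * g⁻¹ := hab
        calc x = g⁻¹ * (g * x * g⁻¹) * g := by group
        _ = g⁻¹ * (a * b) * g := by rw [this]
        _ = (g⁻¹ * a * g) * (g⁻¹ * b * g) := by group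
      have ha' : g⁻¹ * a * g ∈ P' := by
        have := (hg (g⁻¹ * a * g)).2
        apply this
        have : g * (g⁻¹ * a * g) * g⁻¹ = a := by group
        rwa [this]
      have hb' : g⁻¹ * b * g ∈ frattini G := by
        have := (frattini G).normal_of_characteristic.conj_mem b hb g⁻¹
        simpa using this
      rw [hx']
      exact mul_mem (hP'K ha') (hΦK hb')
  -- `H` normalizes `K` since `⁅H,H⁆ ≤ frattini G ≤ K`
  have hconj : ∀ h ∈ H, ∀ x ∈ K, h * x * h⁻¹ ∈ K := by
    intro h hh x hx
    obtain ⟨a, ha, b, hb, rfl⟩ := (hKmem x).1 hx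
    have : h * (a * b) * h⁻¹ = ((h * a * h⁻¹ * a⁻¹) * a) * (h * b * h⁻¹) := by group
    rw [this]
    refine mul_mem (mul_mem (hΦK ?_) (hP'K ha))
      (hΦK ((frattini G).normal_of_characteristic.conj_mem b hb h))
    exact hcomm (commutator_mem_commutator hh (hP'H ha))
  have hN2 : H ≤ normalizer (K : Set G) := by
    intro h hh
    rw [mem_normalizer_iff]
    intro x
    constructor
    · exact fun hx => hconj h hh x hx
    · intro hx
      have := hconj h⁻¹ (inv_mem hh) _ hx
      simpa [mul_assoc] using this
  have hKnorm : K.Normal := by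
    rw [← normalizer_eq_top_iff]
    rw [eq_top_iff, ← frattArg]
    exact sup_le hN1 hN2
  haveI := hKnorm
  -- `P'` is a Sylow `p`-subgroup of `K`
  have hP'pg : IsPGroup p P' := P.isPGroup'.map H.subtype
  have hpgK : IsPGroup p (P'.subgroupOf K) := hP'pg.comap_subtype
  have hndvd : ¬ p ∣ (P'.subgroupOf K).index := by
    intro hdvd
    have hPH : (P'.subgroupOf H) = (P : Subgroup H) :=
      comap_map_eq_self_of_injective H.subtype_injective _
    haveI : ((P : Subgroup H)).FiniteIndex := inferInstance
    have hnd : ¬ p ∣ ((P : Subgroup H)).index := P.not_dvd_index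
    apply hnd
    rw [← hPH]
    have hrel : P'.relIndex K * K.relIndex H = P'.relIndex H :=
      relIndex_mul_relIndex P' K H hP'K hKH
    have : (P'.subgroupOf H).index = P'.relIndex H := rfl
    rw [this, ← hrel]
    exact Dvd.dvd.mul_right hdvd _
  let Q : Sylow p K := hpgK.toSylow hndvd
  have hfq := Sylow.normalizer_sup_eq_top (N := K) Q
  have hQmap : Subgroup.map K.subtype (Q : Subgroup K) = P' := by
    have : (Q : Subgroup K) = P'.subgroupOf K := rfl
    rw [this, subgroupOf_map_subtype, inf_of_le_left hP'K]
  rw [hQmap] at hfq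
  -- so `N_G(P') ⊔ frattini G = ⊤`, hence `N_G(P') = ⊤`
  have hsup : normalizer (P' : Set G) ⊔ frattini G = ⊤ := by
    rw [hK] at hfq
    rw [← hfq, ← sup_assoc, sup_of_le_left (le_normalizer)]
  have hPN : normalizer (P' : Set G) = ⊤ := frattini_nongenerating hsup
  have hP'normal : P'.Normal := normalizer_eq_top_iff.mp hPN
  haveI : Fact p.Prime := inferInstance
  have : Group.IsNilpotent P' := hP'pg.isNilpotent
  exact le_trans (nilpotent_normal_le_fitting P' hP'normal this) hFF

lemma fitting_not_le_frattini (G : Type*) [Group G] [Finite G] [Nontrivial G] [Group.IsSolvable G] :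
    ¬ fittingSubgroup G ≤ frattini G := by
  intro hle
  have heq : fittingSubgroup G = frattini G := le_antisymm hle (frattini_le_fitting G)
  -- the Fitting subgroup is proper
  have hFne : fittingSubgroup G ≠ ⊤ := by
    obtain ⟨M, hM, -⟩ := (eq_top_or_exists_le_coatom (⊥ : Subgroup G)).resolve_left
      bot_ne_top
    intro htop
    exact hM.1 (top_le_iff.mp (htop ▸ heq ▸ frattini_le_coatom hM : (⊤ : Subgroup G) ≤ M))
  -- the quotient is a nontrivial solvable group
  haveI : Nontrivial (G ⧸ fittingSubgroup G) := by
    obtain ⟨g, hg⟩ : ∃ g, g ∉ fittingSubgroup G := by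
      by_contra hall
      push_neg at hall
      exact hFne (Subgroup.eq_top_iff' _ |>.mpr hall)
    exact ⟨⟨QuotientGroup.mk g, 1, by simpa [QuotientGroup.eq_one_iff] using hg⟩⟩
  -- take the last nontrivial term of the derived series of the quotient
  have hsolv : ∃ n, derivedSeries (G ⧸ fittingSubgroup G) n = ⊥ := Group.IsSolvable.solvable
  classical
  have hbot : derivedSeries (G ⧸ fittingSubgroup G) (Nat.find hsolv) = ⊥ := Nat.find_spec hsolv
  have hn0 : Nat.find hsolv ≠ 0 := by
    intro h0
    rw [h0, derivedSeries_zero] at hbot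
    exact top_ne_bot hbot
  obtain ⟨m, hm⟩ : ∃ m, Nat.find hsolv = m + 1 := Nat.exists_eq_succ_of_ne_zero hn0
  set A := derivedSeries (G ⧸ fittingSubgroup G) m with hA
  have hAne : A ≠ ⊥ := Nat.find_min hsolv (hm ▸ Nat.lt_succ_self m)
  have hAA : ⁅A, A⁆ = ⊥ := by rw [hA, ← derivedSeries_succ, ← hm]; exact hbot
  set H := Subgroup.comap (QuotientGroup.mk' (fittingSubgroup G)) A with hH
  haveI hHnorm : H.Normal := Subgroup.Normal.comap (derivedSeries_normal _ _) _
  have hΦH : frattini G ≤ H := by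
    intro x hx
    have hxF : x ∈ fittingSubgroup G := heq ▸ hx
    show QuotientGroup.mk' (fittingSubgroup G) x ∈ A
    have hx1 : QuotientGroup.mk' (fittingSubgroup G) x = 1 :=
      (QuotientGroup.eq_one_iff x).mpr hxF
    rw [hx1]; exact A.one_mem
  have hcomm : ⁅H, H⁆ ≤ frattini G := by
    rw [commutator_le]
    intro g hg h hh
    rw [← heq]
    open commutatorElement in
    have : QuotientGroup.mk' (fittingSubgroup G) ⁅g, h⁆ ∈ (⊥ : Subgroup (G ⧸ fittingSubgroup G)) := by
      rw [map_commutatorElement, ← hAA]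
      exact commutator_mem_commutator hg hh
    exact (QuotientGroup.eq_one_iff _).mp (Subgroup.mem_bot.mp this)
  -- every Sylow subgroup of `H` lies in `frattini G`, hence `H ≤ frattini G`
  have hHle : H ≤ frattini G := by
    have : (frattini G).subgroupOf H = ⊤ := by
      apply eq_top_of_sylow_le
      intro p hp
      haveI : Fact p.Prime := ⟨hp⟩
      obtain ⟨P⟩ : Nonempty (Sylow p H) := inferInstance
      exact ⟨P, Subgroup.map_le_iff_le_comap.mp (sylow_map_le_frattini H hΦH hcomm hle P)⟩
    exact subgroupOf_eq_top.mp this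
  -- but `H` is strictly bigger than the Fitting subgroup: contradiction
  obtain ⟨a, haA, hane⟩ := (A.bot_or_exists_ne_one).resolve_left hAne
  obtain ⟨g, rfl⟩ := QuotientGroup.mk'_surjective (fittingSubgroup G) a
  have hgH : g ∈ H := haA
  have : g ∈ fittingSubgroup G := heq ▸ hHle hgH
  exact hane ((QuotientGroup.eq_one_iff g).mpr this)

lemma fitting_semidirect {G : Type*} [Group G] (U : Subgroup G)
    (hsup : fittingSubgroup G ⊔ U = ⊤) :
    ∃ φ : (fittingSubgroup G) ⋊[MulAut.conjNormal.comp U.subtype] U →* G,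
      (∀ (n : fittingSubgroup G) (u : U), φ ⟨n, u⟩ = (n : G) * (u : G)) ∧
        Function.Surjective φ := by
  have hcompat : ∀ u : U, (fittingSubgroup G).subtype.comp
      ((MulAut.conjNormal.comp U.subtype u).toMonoidHom) =
      (MulAut.conj (U.subtype u)).toMonoidHom.comp (fittingSubgroup G).subtype := by
    intro u
    ext n
    simp [MulAut.conjNormal_val]
  refine ⟨SemidirectProduct.lift (fittingSubgroup G).subtype U.subtype hcompat,
    fun n u => rfl, ?_⟩
  intro g
  have hg : g ∈ ((fittingSubgroup G : Set G) * (U : Set G)) := by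
    rw [← Subgroup.normal_mul, hsup]
    exact Subgroup.mem_top g
  obtain ⟨a, ha, b, hb, rfl⟩ := hg
  exact ⟨⟨⟨a, ha⟩, ⟨b, hb⟩⟩, rfl⟩

/-- In a non-trivial finite solvable group the Fitting subgroup `F(G)` has a proper
supplement `U`; in particular the multiplication map `F(G) ⋊ U → G` (with `U` acting
on `F(G)` by conjugation) is a surjective homomorphism. -/
theorem fitting_has_proper_supplement_of_finite_solvable
    (G : Type*) [Group G] [Finite G] [Nontrivial G] [Group.IsSolvable G] :
    ∃ U : Subgroup G, U ≠ ⊤ ∧ fittingSubgroup G ⊔ U = ⊤ ∧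
      ∃ φ : (fittingSubgroup G) ⋊[MulAut.conjNormal.comp U.subtype] U →* G,
        (∀ (n : fittingSubgroup G) (u : U), φ ⟨n, u⟩ = (n : G) * (u : G)) ∧
          Function.Surjective φ := by
  have hnle : ¬ fittingSubgroup G ≤ frattini G := fitting_not_le_frattini G
  obtain ⟨M, hM, hnleM⟩ : ∃ M : Subgroup G, IsCoatom M ∧ ¬ fittingSubgroup G ≤ M := by
    by_contra hall
    push_neg at hall
    apply hnle
    rw [frattini, Order.radical]
    exact le_iInf₂ fun M hM => hall M hM
  have hsup : fittingSubgroup G ⊔ M = ⊤ := by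
    apply hM.2
    exact lt_of_le_of_ne le_sup_right fun h => hnleM (h ▸ le_sup_left)
  exact ⟨M, hM.1, hsup, fitting_semidirect M hsup⟩
end
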